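/- (Uniqueness in the critical case, normalized form) For R = [[1, -1],[1, 1]], the Skorokhod problem has at most one solution for every continuous driving function f with f(0) ≥ 0: if (g, m) and (ḡ, m̄) are both solutions, then g = ḡ and m = m̄. -/

import Mathlib

open Set Filter Topology

section SkorokhodAux

/-- Key step lemma: if `M, Mb` are monotone on `[0,∞)`, `φ = M - Mb` is continuous with
`φ 0 = 0`, `h ≥ 0` satisfies the complementarity condition w.r.t. `M`, and `φ r0 ≥ v`,
then there is `r' ∈ (0, r0]` with `h r' = 0` and `φ r' > v - ε`. -/
lemma skorokhod_step (M Mb h : ℝ → ℝ)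
    (hM : MonotoneOn M (Set.Ici 0)) (hMb : MonotoneOn Mb (Set.Ici 0))
    (hcont : ContinuousOn (fun t => M t - Mb t) (Set.Ici 0))
    (h0 : M 0 - Mb 0 = 0)
    (hpos : ∀ t ∈ Set.Ici (0:ℝ), 0 ≤ h t)
    (hcompl : ∀ s t, 0 ≤ s → s ≤ t → (∀ r ∈ Set.Icc s t, 0 < h r) → M s = M t)
    (r0 v ε : ℝ) (hε : 0 < ε) (hεv : ε < v) (hr0 : 0 ≤ r0)
    (hv : v ≤ M r0 - Mb r0) :
    ∃ r', 0 < r' ∧ r' ≤ r0 ∧ h r' = 0 ∧ v - ε < M r' - Mb r' := by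
  set φ : ℝ → ℝ := fun t => M t - Mb t with hφ
  set S : Set ℝ := Set.Icc 0 r0 ∩ φ ⁻¹' (Set.Iic (v - ε)) with hS
  have h0S : (0:ℝ) ∈ S := by
    constructor
    · exact ⟨le_refl _, hr0⟩
    · simp only [Set.mem_preimage, Set.mem_Iic]
      rw [show φ 0 = 0 from h0]; linarith
  have hSclosed : IsClosed S := by
    apply ContinuousOn.preimage_isClosed_of_isClosed
      (hcont.mono (fun x hx => hx.1)) isClosed_Icc isClosed_Iic
  have hScompact : IsCompact S :=
    (isCompact_Icc (a := (0:ℝ)) (b := r0)).of_isClosed_subset hSclosed inter_subset_left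
  set t₀ : ℝ := sSup S with ht₀def
  have ht₀S : t₀ ∈ S := hScompact.sSup_mem ⟨0, h0S⟩
  have ht₀0 : 0 ≤ t₀ := ht₀S.1.1
  have ht₀le : t₀ ≤ r0 := ht₀S.1.2
  have ht₀φ : φ t₀ ≤ v - ε := ht₀S.2
  have ht₀lt : t₀ < r0 := by
    rcases lt_or_eq_of_le ht₀le with h' | h'
    · exact h'
    · exfalso; rw [h'] at ht₀φ; change v ≤ φ r0 at hv; linarith
  -- there is a zero of h in (t₀, r0]
  have hzero : ∃ r', t₀ < r' ∧ r' ≤ r0 ∧ h r' = 0 := by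
    by_contra hno
    push_neg at hno
    have hpos' : ∀ r, t₀ < r → r ≤ r0 → 0 < h r := by
      intro r h1 h2
      rcases (hpos r (le_trans ht₀0 h1.le)).lt_or_eq with h' | h'
      · exact h'
      · exact absurd h'.symm (hno r h1 h2)
    have hge : ∀ s, t₀ < s → s ≤ r0 → v ≤ φ s := by
      intro s h1 h2
      have hMs : M s = M r0 := by
        apply hcompl s r0 (le_trans ht₀0 h1.le) h2
        intro r hr
        exact hpos' r (lt_of_lt_of_le h1 hr.1) hr.2
      have hMbs : Mb s ≤ Mb r0 :=
        hMb (le_trans ht₀0 h1.le) (le_trans ht₀0 (le_trans h1.le h2)) h2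
      change v ≤ M s - Mb s
      change v ≤ M r0 - Mb r0 at hv
      rw [hMs]; linarith
    -- take limit s → t₀⁺
    have hcw : ContinuousWithinAt φ (Set.Ioi t₀) t₀ := by
      apply (hcont t₀ ht₀0).mono
      intro x hx
      exact le_trans ht₀0 (le_of_lt hx)
    have hnb : (𝓝[>] t₀).NeBot := nhdsGT_neBot t₀
    have hev : ∀ᶠ x in 𝓝[>] t₀, v ≤ φ x := by
      have h1 : ∀ᶠ x in 𝓝[>] t₀, x ∈ Set.Ioi t₀ := self_mem_nhdsWithin
      have h2 : ∀ᶠ x in 𝓝[>] t₀, x < r0 :=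
        eventually_nhdsWithin_of_eventually_nhds (Filter.Tendsto.eventually_lt_const ht₀lt tendsto_id)
      filter_upwards [h1, h2] with x hx1 hx2
      exact hge x hx1 hx2.le
    have := ge_of_tendsto hcw.tendsto hev
    linarith
  obtain ⟨r', hr'1, hr'2, hr'3⟩ := hzero
  refine ⟨r', lt_of_le_of_lt ht₀0 hr'1, hr'2, hr'3, ?_⟩
  by_contra hle
  push_neg at hle
  have : r' ∈ S := ⟨⟨le_trans ht₀0 hr'1.le, hr'2⟩, by simp only [Set.mem_preimage, Set.mem_Iic]; exact hle⟩
  have : r' ≤ t₀ := le_csSup (hScompact.bddAbove) this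
  linarith

/-- cyclic choice of four functions -/
def skCyc (φ0 φ1 φ2 φ3 : ℝ → ℝ) (n : ℕ) : ℝ → ℝ :=
  match n % 4 with
  | 0 => φ0
  | 1 => φ1
  | 2 => φ2
  | _ => φ3

lemma skCyc_eq0 (φ0 φ1 φ2 φ3 : ℝ → ℝ) {n : ℕ} (h : n % 4 = 0) :
    skCyc φ0 φ1 φ2 φ3 n = φ0 := by unfold skCyc; rw [h]; rfl
lemma skCyc_eq1 (φ0 φ1 φ2 φ3 : ℝ → ℝ) {n : ℕ} (h : n % 4 = 1) :
    skCyc φ0 φ1 φ2 φ3 n = φ1 := by unfold skCyc; rw [h]; rfl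
lemma skCyc_eq2 (φ0 φ1 φ2 φ3 : ℝ → ℝ) {n : ℕ} (h : n % 4 = 2) :
    skCyc φ0 φ1 φ2 φ3 n = φ2 := by unfold skCyc; rw [h]; rfl
lemma skCyc_eq3 (φ0 φ1 φ2 φ3 : ℝ → ℝ) {n : ℕ} (h : n % 4 = 3) :
    skCyc φ0 φ1 φ2 φ3 n = φ3 := by unfold skCyc; rw [h]; rfl

/-- The cycling lemma: if each of the four functions passes its (slightly decreased) large
positive values backward in time to the next function in the cycle, and `φ2 = -φ0`, then
`φ0` can never be positive. -/
lemma skorokhod_cycle (φ0 φ1 φ2 φ3 : ℝ → ℝ)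
    (hc : ContinuousOn φ0 (Set.Ici 0))
    (h00 : φ0 0 = 0)
    (hneg : ∀ t, φ2 t = -(φ0 t))
    (S0 : ∀ r0 v ε : ℝ, 0 < ε → ε < v → 0 ≤ r0 → v ≤ φ0 r0 →
      ∃ r', 0 < r' ∧ r' ≤ r0 ∧ v - ε < φ0 r' ∧ φ0 r' ≤ φ1 r')
    (S1 : ∀ r0 v ε : ℝ, 0 < ε → ε < v → 0 ≤ r0 → v ≤ φ1 r0 →
      ∃ r', 0 < r' ∧ r' ≤ r0 ∧ v - ε < φ1 r' ∧ φ1 r' ≤ φ2 r')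
    (S2 : ∀ r0 v ε : ℝ, 0 < ε → ε < v → 0 ≤ r0 → v ≤ φ2 r0 →
      ∃ r', 0 < r' ∧ r' ≤ r0 ∧ v - ε < φ2 r' ∧ φ2 r' ≤ φ3 r')
    (S3 : ∀ r0 v ε : ℝ, 0 < ε → ε < v → 0 ≤ r0 → v ≤ φ3 r0 →
      ∃ r', 0 < r' ∧ r' ≤ r0 ∧ v - ε < φ3 r' ∧ φ3 r' ≤ φ0 r')
    {t0 : ℝ} (ht0 : 0 ≤ t0) : φ0 t0 ≤ 0 := by
  by_contra hO
  push_neg at hO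
  set a : ℝ := φ0 t0 with ha
  have ht0' : 0 < t0 := by
    rcases ht0.lt_or_eq with h' | h'
    · exact h'
    · exfalso
      have : a = 0 := by rw [ha, ← h', h00]
      linarith
  set Ψ : ℕ → ℝ → ℝ := skCyc φ0 φ1 φ2 φ3 with hΨ
  -- the step property for Ψ
  have hstep : ∀ n (r0 v ε : ℝ), 0 < ε → ε < v → 0 ≤ r0 → v ≤ Ψ n r0 →
      ∃ r', 0 < r' ∧ r' ≤ r0 ∧ v - ε < Ψ n r' ∧ Ψ n r' ≤ Ψ (n+1) r' := by
    intro n r0 v ε h1 h2 h3 h4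
    have hm : n % 4 = 0 ∨ n % 4 = 1 ∨ n % 4 = 2 ∨ n % 4 = 3 := by omega
    rcases hm with h | h | h | h
    · rw [hΨ, skCyc_eq0 _ _ _ _ h, skCyc_eq1 _ _ _ _ (by omega : (n+1) % 4 = 1)]
      rw [hΨ, skCyc_eq0 _ _ _ _ h] at h4
      exact S0 r0 v ε h1 h2 h3 h4
    · rw [hΨ, skCyc_eq1 _ _ _ _ h, skCyc_eq2 _ _ _ _ (by omega : (n+1) % 4 = 2)]
      rw [hΨ, skCyc_eq1 _ _ _ _ h] at h4
      exact S1 r0 v ε h1 h2 h3 h4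
    · rw [hΨ, skCyc_eq2 _ _ _ _ h, skCyc_eq3 _ _ _ _ (by omega : (n+1) % 4 = 3)]
      rw [hΨ, skCyc_eq2 _ _ _ _ h] at h4
      exact S2 r0 v ε h1 h2 h3 h4
    · rw [hΨ, skCyc_eq3 _ _ _ _ h, skCyc_eq0 _ _ _ _ (by omega : (n+1) % 4 = 0)]
      rw [hΨ, skCyc_eq3 _ _ _ _ h] at h4
      exact S3 r0 v ε h1 h2 h3 h4
  -- thresholds
  obtain ⟨v, hv0, hva, hvd⟩ : ∃ v : ℕ → ℝ, v 0 = a ∧ (∀ n, a/2 < v n) ∧ ∀ n, v (n+1) < v n := by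
    refine ⟨fun n => a/2 + a/2 * (1/2:ℝ)^n, by norm_num, fun n => ?_, fun n => ?_⟩
    · have : 0 < a/2 * (1/2:ℝ)^n := by positivity
      linarith
    · have h1 : (1/2:ℝ)^(n+1) < (1/2)^n := by
        apply pow_lt_pow_right_of_lt_one₀ (by norm_num) (by norm_num) (by omega)
      have ha2 : 0 < a/2 := by linarith
      nlinarith
  -- invariant
  set Q : ℕ → ℝ → Prop := fun n r => 0 < r ∧ r ≤ t0 ∧ v n ≤ Ψ n r with hQdef
  have key : ∀ n r, Q n r → ∃ r', Q (n+1) r' ∧ r' ≤ r := by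
    intro n r hQQ
    obtain ⟨h1, h2, h3⟩ := hQQ
    obtain ⟨r', k1, k2, k3, k4⟩ :=
      hstep n r (v n) (v n - v (n+1)) (by linarith [hvd n]) (by linarith [hva (n+1), hO]) h1.le h3
    exact ⟨r', ⟨k1, le_trans k2 h2, by change v (n+1) ≤ Ψ (n+1) r'; linarith⟩, k2⟩
  choose! F hF using key
  set u : ℕ → ℝ := fun n => Nat.rec t0 F n with hu
  have hu0 : u 0 = t0 := rfl
  have huS : ∀ n, u (n+1) = F n (u n) := fun n => rfl
  have hQ0 : Q 0 t0 := by
    refine ⟨ht0', le_refl _, ?_⟩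
    rw [hv0, hΨ, skCyc_eq0 _ _ _ _ (by omega : 0 % 4 = 0)]
  have hQn : ∀ n, Q n (u n) := by
    intro n
    induction n with
    | zero => exact hQ0
    | succ k ih => rw [huS]; exact (hF k (u k) ih).1
  have hdec : ∀ n, u (n+1) ≤ u n := by
    intro n; rw [huS]; exact (hF n (u n) (hQn n)).2
  -- limit
  have hanti : Antitone u := antitone_nat_of_succ_le hdec
  have hbdd : BddBelow (Set.range u) := ⟨0, by rintro x ⟨n, rfl⟩; exact (hQn n).1.le⟩
  set L : ℝ := ⨅ n, u n with hL
  have htend : Tendsto u atTop (𝓝 L) := tendsto_atTop_ciInf hanti hbdd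
  have hL0 : 0 ≤ L := le_ciInf fun n => (hQn n).1.le
  have hcw : ContinuousWithinAt φ0 (Set.Ici 0) L := hc L hL0
  -- two subsequences
  have hsub : ∀ c : ℕ, Tendsto (fun j => u (4*j + c)) atTop (𝓝 L) := by
    intro c
    apply htend.comp
    apply tendsto_atTop_mono (fun j => by omega : ∀ j, j ≤ 4*j + c) tendsto_id
  have hφtend : ∀ c : ℕ, Tendsto (fun j => φ0 (u (4*j + c))) atTop (𝓝 (φ0 L)) := by
    intro c
    exact hcw.tendsto.comp (tendsto_nhdsWithin_of_tendsto_nhds_of_eventually_within _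
      (hsub c) (Filter.Eventually.of_forall fun j => (hQn (4*j + c)).1.le))
  have hup : a/2 ≤ φ0 L := by
    apply ge_of_tendsto (hφtend 0)
    apply Filter.Eventually.of_forall
    intro j
    have := (hQn (4*j + 0)).2.2
    rw [hΨ, skCyc_eq0 _ _ _ _ (by omega : (4*j + 0) % 4 = 0)] at this
    linarith [hva (4*j+0)]
  have hdn : φ0 L ≤ -(a/2) := by
    apply le_of_tendsto (hφtend 2)
    apply Filter.Eventually.of_forall
    intro j
    have := (hQn (4*j + 2)).2.2
    rw [hΨ, skCyc_eq2 _ _ _ _ (by omega : (4*j + 2) % 4 = 2)] at this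
    rw [hneg] at this
    linarith [hva (4*j+2)]
  linarith

end SkorokhodAux


open Set Matrix

/-- The Skorokhod problem on `[0,∞)` in the nonnegative quadrant of `ℝ²` with
reflection matrix `R` and driving function `f`: `(g, m)` is a solution. -/
def IsSkorokhod (R : Matrix (Fin 2) (Fin 2) ℝ) (f g m : ℝ → Fin 2 → ℝ) : Prop :=
  ContinuousOn g (Set.Ici 0) ∧ ContinuousOn m (Set.Ici 0) ∧
  (∀ t ∈ Set.Ici (0:ℝ), ∀ j, 0 ≤ g t j) ∧
  m 0 = 0 ∧
  (∀ j, MonotoneOn (fun t => m t j) (Set.Ici 0)) ∧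
  (∀ t ∈ Set.Ici (0:ℝ), g t = f t + R.mulVec (m t)) ∧
  (∀ j, ∀ s t, 0 ≤ s → s ≤ t → (∀ r ∈ Set.Icc s t, 0 < g r j) → m s j = m t j)

/-- Uniqueness of solutions of the Skorokhod problem with matrix `R`, for every
continuous driving function `f` with `f 0 ≥ 0`. -/
def SkorokhodUnique (R : Matrix (Fin 2) (Fin 2) ℝ) : Prop :=
  ∀ f : ℝ → Fin 2 → ℝ, ContinuousOn f (Set.Ici 0) → (∀ j, 0 ≤ f 0 j) →
    ∀ g m g' m', IsSkorokhod R f g m → IsSkorokhod R f g' m' →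
      ∀ t ∈ Set.Ici (0:ℝ), g t = g' t ∧ m t = m' t

theorem uniqueness_critical_normalized
    (f g m gbar mbar : ℝ → Fin 2 → ℝ)
    (hf : ContinuousOn f (Set.Ici 0)) (hf0 : ∀ j, 0 ≤ f 0 j)
    (h : IsSkorokhod (!![1, -1; 1, 1]) f g m)
    (hbar : IsSkorokhod (!![1, -1; 1, 1]) f gbar mbar) :
    ∀ t ∈ Set.Ici (0:ℝ), g t = gbar t ∧ m t = mbar t := by
  obtain ⟨hgc, hmc, hgpos, hm0, hmmono, hrel, hcompl⟩ := h
  obtain ⟨hgc', hmc', hgpos', hm0', hmmono', hrel', hcompl'⟩ := hbar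
  set α : ℝ → ℝ := fun t => m t 0 - mbar t 0 with hαdef
  set β : ℝ → ℝ := fun t => m t 1 - mbar t 1 with hβdef
  have hα0 : α 0 = 0 := by simp [hαdef, hm0, hm0']
  have hβ0 : β 0 = 0 := by simp [hβdef, hm0, hm0']
  have hcm : ∀ j : Fin 2, ContinuousOn (fun t => m t j) (Set.Ici 0) := fun j =>
    (continuous_apply j).comp_continuousOn hmc
  have hcm' : ∀ j : Fin 2, ContinuousOn (fun t => mbar t j) (Set.Ici 0) := fun j =>
    (continuous_apply j).comp_continuousOn hmc'
  have hαc : ContinuousOn α (Set.Ici 0) := (hcm 0).sub (hcm' 0)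
  have hβc : ContinuousOn β (Set.Ici 0) := (hcm 1).sub (hcm' 1)
  -- difference identities
  have hd0 : ∀ t ∈ Set.Ici (0:ℝ), g t 0 - gbar t 0 = α t - β t := by
    intro t ht
    rw [show g t = f t + (!![1, -1; 1, 1]).mulVec (m t) from hrel t ht,
       show gbar t = f t + (!![1, -1; 1, 1]).mulVec (mbar t) from hrel' t ht]
    simp [Matrix.mulVec, dotProduct, Fin.sum_univ_two, hαdef, hβdef, Matrix.vecHead, Matrix.vecTail]
    ring
  have hd1 : ∀ t ∈ Set.Ici (0:ℝ), g t 1 - gbar t 1 = α t + β t := by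
    intro t ht
    rw [show g t = f t + (!![1, -1; 1, 1]).mulVec (m t) from hrel t ht,
       show gbar t = f t + (!![1, -1; 1, 1]).mulVec (mbar t) from hrel' t ht]
    simp [Matrix.mulVec, dotProduct, Fin.sum_univ_two, hαdef, hβdef, Matrix.vecHead, Matrix.vecTail]
    ring
  -- the four step lemmas
  have S0 : ∀ r0 v ε : ℝ, 0 < ε → ε < v → 0 ≤ r0 → v ≤ α r0 →
      ∃ r', 0 < r' ∧ r' ≤ r0 ∧ v - ε < α r' ∧ α r' ≤ β r' := by
    intro r0 v ε h1 h2 h3 h4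
    obtain ⟨r', k1, k2, k3, k4⟩ := skorokhod_step (fun t => m t 0) (fun t => mbar t 0)
      (fun t => g t 0) (hmmono 0) (hmmono' 0) hαc hα0
      (fun t ht => hgpos t ht 0) (hcompl 0) r0 v ε h1 h2 h3 h4
    refine ⟨r', k1, k2, k4, ?_⟩
    have hr' : r' ∈ Set.Ici (0:ℝ) := k1.le
    have := hd0 r' hr'
    have hb := hgpos' r' hr' 0
    have k3' : g r' 0 = 0 := k3
    linarith
  have S1 : ∀ r0 v ε : ℝ, 0 < ε → ε < v → 0 ≤ r0 → v ≤ β r0 →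
      ∃ r', 0 < r' ∧ r' ≤ r0 ∧ v - ε < β r' ∧ β r' ≤ -(α r') := by
    intro r0 v ε h1 h2 h3 h4
    obtain ⟨r', k1, k2, k3, k4⟩ := skorokhod_step (fun t => m t 1) (fun t => mbar t 1)
      (fun t => g t 1) (hmmono 1) (hmmono' 1) hβc hβ0
      (fun t ht => hgpos t ht 1) (hcompl 1) r0 v ε h1 h2 h3 h4
    refine ⟨r', k1, k2, k4, ?_⟩
    have hr' : r' ∈ Set.Ici (0:ℝ) := k1.le
    have := hd1 r' hr'
    have hb := hgpos' r' hr' 1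
    have k3' : g r' 1 = 0 := k3
    linarith
  have S2 : ∀ r0 v ε : ℝ, 0 < ε → ε < v → 0 ≤ r0 → v ≤ -(α r0) →
      ∃ r', 0 < r' ∧ r' ≤ r0 ∧ v - ε < -(α r') ∧ -(α r') ≤ -(β r') := by
    intro r0 v ε h1 h2 h3 h4
    obtain ⟨r', k1, k2, k3, k4⟩ := skorokhod_step (fun t => mbar t 0) (fun t => m t 0)
      (fun t => gbar t 0) (hmmono' 0) (hmmono 0)
      (by
        have : (fun t => mbar t 0 - m t 0) = fun t => -(α t) := by
          funext t; show mbar t 0 - m t 0 = -(m t 0 - mbar t 0); ring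
        rw [this]; exact hαc.neg)
      (by simp [hm0, hm0'])
      (fun t ht => hgpos' t ht 0) (hcompl' 0) r0 v ε h1 h2 h3
      (by have h4' : v ≤ -(m r0 0 - mbar r0 0) := h4; linarith)
    refine ⟨r', k1, k2, by show v - ε < -(m r' 0 - mbar r' 0); linarith, ?_⟩
    have hr' : r' ∈ Set.Ici (0:ℝ) := k1.le
    have := hd0 r' hr'
    have hb := hgpos r' hr' 0
    have k3' : gbar r' 0 = 0 := k3
    linarith
  have S3 : ∀ r0 v ε : ℝ, 0 < ε → ε < v → 0 ≤ r0 → v ≤ -(β r0) →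
      ∃ r', 0 < r' ∧ r' ≤ r0 ∧ v - ε < -(β r') ∧ -(β r') ≤ α r' := by
    intro r0 v ε h1 h2 h3 h4
    obtain ⟨r', k1, k2, k3, k4⟩ := skorokhod_step (fun t => mbar t 1) (fun t => m t 1)
      (fun t => gbar t 1) (hmmono' 1) (hmmono 1)
      (by
        have : (fun t => mbar t 1 - m t 1) = fun t => -(β t) := by
          funext t; show mbar t 1 - m t 1 = -(m t 1 - mbar t 1); ring
        rw [this]; exact hβc.neg)
      (by simp [hm0, hm0'])
      (fun t ht => hgpos' t ht 1) (hcompl' 1) r0 v ε h1 h2 h3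
      (by have h4' : v ≤ -(m r0 1 - mbar r0 1) := h4; linarith)
    refine ⟨r', k1, k2, by show v - ε < -(m r' 1 - mbar r' 1); linarith, ?_⟩
    have hr' : r' ∈ Set.Ici (0:ℝ) := k1.le
    have := hd1 r' hr'
    have hb := hgpos r' hr' 1
    have k3' : gbar r' 1 = 0 := k3
    linarith
  -- apply the cycle lemma in the four rotations
  intro t ht
  have hA : α t ≤ 0 :=
    skorokhod_cycle α β (fun s => -(α s)) (fun s => -(β s)) hαc hα0 (fun s => rfl)
      S0 S1 S2 S3 ht
  have hB : β t ≤ 0 :=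
    skorokhod_cycle β (fun s => -(α s)) (fun s => -(β s)) α hβc hβ0
      (fun s => by ring) S1 S2 S3 S0 ht
  have hC : -(α t) ≤ 0 :=
    skorokhod_cycle (fun s => -(α s)) (fun s => -(β s)) α β hαc.neg
      (by simp [hα0]) (fun s => by ring) S2 S3 S0 S1 ht
  have hD : -(β t) ≤ 0 :=
    skorokhod_cycle (fun s => -(β s)) α β (fun s => -(α s)) hβc.neg
      (by simp [hβ0]) (fun s => by ring) S3 S0 S1 S2 ht
  have hmeq : m t = mbar t := by
    funext j
    fin_cases j
    · have : α t = 0 := le_antisymm hA (by linarith)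
      simp only [hαdef] at this; simpa using by linarith [this]
    · have : β t = 0 := le_antisymm hB (by linarith)
      simp only [hβdef] at this; simpa using by linarith [this]
  refine ⟨?_, hmeq⟩
  rw [hrel t ht, hrel' t ht, hmeq]
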